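/- Let n ≥ 2, u ∈ S^{n−1}, and h ∈ (0,1). Then σ(C(u,h)) < ( (1−h²)^{(n−1)/2} / (n·h) ) · ( κ_{n−1} / κ_n ), where C(u,h) = {θ ∈ S^{n−1} : ⟨u,θ⟩ ≥ h}, σ is the rotation-invariant probability measure on S^{n−1}, and κ_m denotes the m-dimensional Lebesgue volume of the m-dimensional Euclidean unit ball. -/

import Mathlib

open Metric Set MeasureTheory
open scoped RealInnerProductSpace ENNReal Pointwise

abbrev Euc (n : ℕ) := EuclideanSpace ℝ (Fin n)

/-- The covering number `N(K, T)`: the minimal number of translates of `T`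
needed to cover `K`. -/
noncomputable def coveringNumber {n : ℕ} (K T : Set (Euc n)) : ℕ :=
  sInf {N : ℕ | ∃ x : Fin N → Euc n, K ⊆ ⋃ i, x i +ᵥ T}

/-- The radial function `ρ_K(θ) = sup {t ≥ 0 : tθ ∈ K}`. -/
noncomputable def radialFn {n : ℕ} (K : Set (Euc n)) (θ : Euc n) : ℝ :=
  sSup {t : ℝ | 0 ≤ t ∧ t • θ ∈ K}

/-- The support function `h_K(u) = sup {⟨x, u⟩ : x ∈ K}`. -/
noncomputable def suppFn {n : ℕ} (K : Set (Euc n)) (u : Euc n) : ℝ :=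
  sSup ((fun x => ⟪x, u⟫) '' K)

/-- `F` is a facet of `P ⊆ ℝⁿ`: a nonempty exposed face of dimension `n - 1`. -/
def IsFacet {n : ℕ} (P F : Set (Euc n)) : Prop :=
  F.Nonempty ∧ IsExposed ℝ P F ∧ Module.finrank ℝ (vectorSpan ℝ F) = n - 1


/-- `κ_m`: the Lebesgue volume of the `m`-dimensional Euclidean unit ball. -/
noncomputable def kappa (m : ℕ) : ℝ :=
  (volume (closedBall (0 : EuclideanSpace ℝ (Fin m)) 1)).toReal

section Aux

/-- Strict integral estimate: `∫_h^1 (1-s²)^{k/2} ds < (1-h²)^{(k+2)/2}/((k+1)h)`. -/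
private lemma key_integral_lt {k : ℕ} (hk : 1 ≤ k) {h : ℝ} (hh0 : 0 < h) (hh1 : h < 1) :
    ∫ s in h..(1:ℝ), (Real.sqrt (1 - s^2))^k <
      (Real.sqrt (1 - h^2))^(k+2) / ((k+1) * h) := by
  set f : ℝ → ℝ := fun s => (Real.sqrt (1 - s^2))^k with hf
  have hfc : Continuous f := (Real.continuous_sqrt.comp (by continuity)).pow k
  set G : ℝ → ℝ := fun t => (∫ s in (1:ℝ)..t, f s) + (Real.sqrt (1 - t^2))^(k+2) / ((k+1) * t)
    with hG
  have hG1 : G 1 = 0 := by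
    simp [hG, show (1:ℝ) - 1^2 = 0 by ring, Real.sqrt_zero, zero_pow (by omega : k + 2 ≠ 0)]
  have hcont : ContinuousOn G (Icc h 1) := by
    apply ContinuousOn.add
    · exact (intervalIntegral.continuous_primitive (fun a b => hfc.intervalIntegrable a b)
        1).continuousOn
    · apply ContinuousOn.div
      · exact ((Real.continuous_sqrt.comp (by continuity)).pow _).continuousOn
      · exact (continuous_const.mul continuous_id).continuousOn
      · intro t ht
        have : 0 < t := lt_of_lt_of_le hh0 ht.1
        positivity
  have hderiv : ∀ t ∈ Ioo h 1, deriv G t < 0 := by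
    intro t ht
    have ht0 : 0 < t := hh0.trans ht.1
    have ht1 : t < 1 := ht.2
    have h1t : 0 < 1 - t^2 := by nlinarith
    set D := Real.sqrt (1 - t^2) with hD
    have hDpos : 0 < D := Real.sqrt_pos.2 h1t
    have hD2 : D^2 = 1 - t^2 := Real.sq_sqrt h1t.le
    have h1 : HasDerivAt (fun t => ∫ s in (1:ℝ)..t, f s) (f t) t :=
      intervalIntegral.integral_hasDerivAt_right (hfc.intervalIntegrable _ _)
        (hfc.stronglyMeasurableAtFilter _ _) hfc.continuousAt
    have h2 : HasDerivAt (fun t : ℝ => 1 - t^2) (-(2*t)) t := by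
      simpa using ((hasDerivAt_pow 2 t).const_sub 1)
    have h3 : HasDerivAt (fun t : ℝ => Real.sqrt (1 - t^2)) (1/(2*D) * -(2*t)) t :=
      (Real.hasDerivAt_sqrt h1t.ne').comp t h2
    have h4 : HasDerivAt (fun t : ℝ => (Real.sqrt (1 - t^2))^(k+2))
        (((k:ℝ)+2) * D^(k+1) * (1/(2*D) * -(2*t))) t := by
      have := h3.fun_pow (k+2)
      have e : ((k:ℝ)+2) * D^(k+1) * (1/(2*D) * -(2*t))
          = ((k+2 : ℕ) : ℝ) * Real.sqrt (1 - t^2)^(k+2-1) * (1/(2*D) * -(2*t)) := by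
        rw [show k+2-1 = k+1 by omega, hD]
        push_cast
        ring
      rw [e]
      exact this
    have h5 : HasDerivAt (fun t : ℝ => ((k:ℝ)+1) * t) ((k:ℝ)+1) t := by
      simpa using (hasDerivAt_id t).const_mul ((k:ℝ)+1)
    have h6 : HasDerivAt (fun t : ℝ => (Real.sqrt (1 - t^2))^(k+2) / (((k:ℝ)+1) * t))
        ((((k:ℝ)+2) * D^(k+1) * (1/(2*D) * -(2*t)) * (((k:ℝ)+1)*t) - D^(k+2) * ((k:ℝ)+1))
          / (((k:ℝ)+1)*t)^2) t := by
      exact h4.div h5 (by positivity)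
    have hGd : HasDerivAt G (f t + ((((k:ℝ)+2) * D^(k+1) * (1/(2*D) * -(2*t)) * (((k:ℝ)+1)*t)
        - D^(k+2) * ((k:ℝ)+1)) / (((k:ℝ)+1)*t)^2)) t := by
      exact h1.add h6
    rw [hGd.deriv]
    have hfteq : f t = D^k := rfl
    rw [hfteq]
    have hY : (0:ℝ) < (((k:ℝ)+1)*t)^2 := by positivity
    have hDk : (0:ℝ) < D^k := by positivity
    have heq : ((k:ℝ)+2) * D^(k+1) * (1/(2*D) * -(2*t)) * (((k:ℝ)+1)*t)
        = -(((k:ℝ)+2) * ((k:ℝ)+1) * t^2 * D^k) := by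
      rw [pow_succ]
      field_simp
    rw [heq, show D^(k+2) = D^k * D^2 by ring]
    have key : -(((k:ℝ)+2) * ((k:ℝ)+1) * t^2 * D^k) - D^k * D^2 * ((k:ℝ)+1)
        < -(D^k) * (((k:ℝ)+1)*t)^2 := by
      nlinarith [mul_pos (by positivity : (0:ℝ) < (k:ℝ)+1) (mul_pos hDk (mul_pos ht0 ht0)),
        mul_pos (by positivity : (0:ℝ) < (k:ℝ)+1) (mul_pos hDk (pow_pos hDpos 2))]
    have := (div_lt_iff₀ hY).mpr key
    linarith
  have hanti : StrictAntiOn G (Icc h 1) :=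
    strictAntiOn_of_deriv_neg (convex_Icc h 1) hcont (by
      intro t ht
      rw [interior_Icc] at ht
      exact hderiv t ht)
  have h01 : G 1 < G h := hanti (left_mem_Icc.2 hh1.le) (right_mem_Icc.2 hh1.le) hh1
  rw [hG1] at h01
  have hGh : G h = (∫ s in (1:ℝ)..h, f s) + (Real.sqrt (1 - h^2))^(k+2) / (((k:ℝ)+1) * h) := by
    simp [hG]
  rw [hGh, intervalIntegral.integral_symm] at h01
  have final : (∫ x in h..(1:ℝ), f x) < (Real.sqrt (1 - h^2))^(k+2) / (((k:ℝ)+1) * h) := by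
    linarith
  exact final

set_option maxHeartbeats 1000000 in
/-- Volume bound for the cone over a spherical cap, by slicing along the first coordinate. -/
private lemma volume_cone_le {k : ℕ} (hk : 1 ≤ k) {h : ℝ} (hh0 : 0 < h) (hh1 : h < 1) :
    volume {x : EuclideanSpace ℝ (Fin (k+1)) | (0 < ‖x‖ ∧ ‖x‖ < 1) ∧ h * ‖x‖ ≤ x 0}
      ≤ ENNReal.ofReal ((∫ s in (0:ℝ)..h, (Real.sqrt (1-h^2)/h * s)^k)
          + ∫ s in h..(1:ℝ), (Real.sqrt (1-s^2))^k)
        * volume (closedBall (0 : EuclideanSpace ℝ (Fin k)) 1) := by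
  classical
  set Kk := volume (closedBall (0 : EuclideanSpace ℝ (Fin k)) 1) with hKk
  set N : ℝ × (Fin k → ℝ) → ℝ := fun p => Real.sqrt (p.1^2 + ∑ j, (p.2 j)^2) with hN
  have hNc : Continuous N := by
    apply Real.continuous_sqrt.comp
    exact (continuous_fst.pow 2).add
      (continuous_finset_sum _ fun j _ => ((continuous_apply j).comp continuous_snd).pow 2)
  set W : Set (ℝ × (Fin k → ℝ)) := {p | (0 < N p ∧ N p < 1) ∧ h * N p ≤ p.1} with hW
  have hWm : MeasurableSet W :=
    (((measurableSet_lt measurable_const hNc.measurable).inter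
      (measurableSet_lt hNc.measurable measurable_const)).inter
      (measurableSet_le (continuous_const.mul hNc).measurable continuous_fst.measurable))
  have hψ : MeasurePreserving
      ((MeasurableEquiv.piFinSuccAbove (fun _ : Fin (k+1) => ℝ) 0) ∘
        (MeasurableEquiv.toLp 2 (Fin (k+1) → ℝ)).symm) volume
      ((volume : Measure ℝ).prod (volume : Measure (Fin k → ℝ))) := by
    have h1 := EuclideanSpace.volume_preserving_symm_measurableEquiv_toLp (Fin (k+1))
    have h2 := measurePreserving_piFinSuccAbove (fun _ : Fin (k+1) => (volume : Measure ℝ)) 0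
    rw [← volume_pi] at h2
    have h3 : (Measure.pi fun j : Fin k => (volume : Measure ℝ)) = volume := volume_pi.symm
    rw [h3] at h2
    exact h2.comp h1
  have happ : ∀ x : EuclideanSpace ℝ (Fin (k+1)),
      ((MeasurableEquiv.piFinSuccAbove (fun _ : Fin (k+1) => ℝ) 0) ∘
        (MeasurableEquiv.toLp 2 (Fin (k+1) → ℝ)).symm) x = (x 0, fun j => x j.succ) := by
    intro x
    refine Prod.ext rfl ?_
    funext j
    show x ((0 : Fin (k+1)).succAbove j) = x j.succ
    rw [Fin.zero_succAbove]
  have hset : {x : EuclideanSpace ℝ (Fin (k+1)) | (0 < ‖x‖ ∧ ‖x‖ < 1) ∧ h * ‖x‖ ≤ x 0}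
      = ((MeasurableEquiv.piFinSuccAbove (fun _ : Fin (k+1) => ℝ) 0) ∘
        (MeasurableEquiv.toLp 2 (Fin (k+1) → ℝ)).symm) ⁻¹' W := by
    ext x
    have hnorm : ‖x‖ = Real.sqrt ((x 0)^2 + ∑ j : Fin k, (x j.succ)^2) := by
      rw [EuclideanSpace.norm_eq]
      congr 1
      rw [Fin.sum_univ_succ]
      simp [sq_abs]
    rw [mem_preimage, happ x]
    simp only [mem_setOf_eq, hW, hN, hnorm]
  rw [hset, hψ.measure_preimage hWm.nullMeasurableSet]
  rw [Measure.prod_apply hWm]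
  set r : ℝ → ℝ := fun s => min (Real.sqrt (1-s^2)) (Real.sqrt (1-h^2)/h * s) with hr
  have slice_bound : ∀ s : ℝ,
      (volume : Measure (Fin k → ℝ)) (Prod.mk s ⁻¹' W)
        ≤ (Ioo (0:ℝ) 1).indicator (fun s => ENNReal.ofReal ((r s)^k) * Kk) s := by
    intro s
    by_cases hs : s ∈ Ioo (0:ℝ) 1
    · rw [indicator_of_mem hs]
      have hs0 : 0 < s := hs.1
      have hrs0 : 0 ≤ r s := le_min (Real.sqrt_nonneg _) (by positivity)
      have hsub : (Prod.mk s ⁻¹' W) ⊆ {y : Fin k → ℝ | ∑ j, (y j)^2 ≤ (r s)^2} := by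
        rintro y ⟨⟨hN0, hN1⟩, hhN⟩
        have hQ : (0:ℝ) ≤ ∑ j, (y j)^2 := Finset.sum_nonneg fun j _ => sq_nonneg _
        have harg : (0:ℝ) ≤ s^2 + ∑ j, (y j)^2 := by positivity
        have hNsq : (N (s, y))^2 = s^2 + ∑ j, (y j)^2 := Real.sq_sqrt harg
        have h1 : s^2 + ∑ j, (y j)^2 < 1 := by
          have := (Real.sqrt_lt' one_pos).mp (by simpa [hN] using hN1)
          simpa using this
        have h2 : h^2 * (s^2 + ∑ j, (y j)^2) ≤ s^2 := by
          have : (h * N (s, y))^2 ≤ s^2 := by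
            apply pow_le_pow_left₀ (by positivity) hhN
          calc h^2 * (s^2 + ∑ j, (y j)^2) = (h * N (s,y))^2 := by rw [mul_pow, hNsq]
          _ ≤ s^2 := this
        have e1 : ∑ j, (y j)^2 ≤ (Real.sqrt (1-s^2))^2 := by
          rw [Real.sq_sqrt (by nlinarith : (0:ℝ) ≤ 1 - s^2)]
          linarith
        have e2 : ∑ j, (y j)^2 ≤ (Real.sqrt (1-h^2)/h * s)^2 := by
          have he : (Real.sqrt (1-h^2)/h * s)^2 = (1-h^2)/h^2 * s^2 := by
            rw [mul_pow, div_pow, Real.sq_sqrt (by nlinarith : (0:ℝ) ≤ 1 - h^2)]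
          rw [he, div_mul_eq_mul_div, le_div_iff₀ (by positivity)]
          nlinarith
        rcases min_cases (Real.sqrt (1-s^2)) (Real.sqrt (1-h^2)/h * s) with ⟨heq, _⟩ | ⟨heq, _⟩ <;>
          · simp only [mem_setOf_eq, hr, heq]; assumption
      refine le_trans (measure_mono hsub) ?_
      have hball : {y : Fin k → ℝ | ∑ j, (y j)^2 ≤ (r s)^2}
          = WithLp.toLp 2 ⁻¹'
              (closedBall (0 : EuclideanSpace ℝ (Fin k)) (r s)) := by
        ext y
        simp only [mem_setOf_eq, mem_preimage, mem_closedBall, dist_zero_right]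
        rw [EuclideanSpace.norm_eq, Real.sqrt_le_iff]
        have hc : ∀ i, ‖(WithLp.toLp 2 y : EuclideanSpace ℝ (Fin k)) i‖^2 = (y i)^2 := by
          intro i; simp [sq_abs]
        constructor
        · intro hy; exact ⟨hrs0, by simpa [hc] using hy⟩
        · intro hy; simpa [hc] using hy.2
      rw [hball, (PiLp.volume_preserving_toLp (Fin k)).measure_preimage
        measurableSet_closedBall.nullMeasurableSet]
      rw [Measure.addHaar_closedBall' volume 0 hrs0, finrank_euclideanSpace_fin]
    · rw [indicator_of_notMem hs]
      have hempty : Prod.mk s ⁻¹' W = ∅ := by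
        ext y
        simp only [mem_preimage, mem_empty_iff_false, iff_false]
        rintro ⟨⟨hN0, hN1⟩, hhN⟩
        rw [mem_Ioo, not_and_or] at hs
        push_neg at hs
        rcases hs with hs | hs
        · have : 0 < h * N (s, y) := mul_pos hh0 hN0
          linarith
        · have : s ≤ N (s, y) := by
            refine le_trans ?_ (Real.sqrt_le_sqrt
              (le_add_of_nonneg_right (Finset.sum_nonneg fun j _ => sq_nonneg (y j)) :
                s^2 ≤ s^2 + ∑ j, (y j)^2))
            rw [Real.sqrt_sq (by linarith : (0:ℝ) ≤ s)]
          linarith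
      rw [hempty]
      simp
  have hcont1 : Continuous fun s : ℝ => (Real.sqrt (1-h^2)/h * s)^k :=
    (continuous_const.mul continuous_id).pow k
  have hcont2 : Continuous fun s : ℝ => (Real.sqrt (1-s^2))^k :=
    (Real.continuous_sqrt.comp (by continuity)).pow k
  have hint1 : ∫⁻ s in Ioo (0:ℝ) h, ENNReal.ofReal ((Real.sqrt (1-h^2)/h * s)^k)
      = ENNReal.ofReal (∫ s in (0:ℝ)..h, (Real.sqrt (1-h^2)/h * s)^k) := by
    rw [intervalIntegral.integral_of_le hh0.le, integral_Ioc_eq_integral_Ioo]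
    rw [← ofReal_integral_eq_lintegral_ofReal
      ((hcont1.integrableOn_Icc (a := 0) (b := h)).mono_set Ioo_subset_Icc_self)
      (ae_restrict_of_forall_mem measurableSet_Ioo fun s hs =>
        pow_nonneg (mul_nonneg (by positivity) hs.1.le) k)]
  have hint2 : ∫⁻ s in Ico h 1, ENNReal.ofReal ((Real.sqrt (1-s^2))^k)
      = ENNReal.ofReal (∫ s in h..(1:ℝ), (Real.sqrt (1-s^2))^k) := by
    rw [intervalIntegral.integral_of_le hh1.le, integral_Ioc_eq_integral_Ioo,
      ← integral_Ico_eq_integral_Ioo]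
    rw [← ofReal_integral_eq_lintegral_ofReal
      ((hcont2.integrableOn_Icc (a := h) (b := 1)).mono_set Ico_subset_Icc_self)
      (ae_restrict_of_forall_mem measurableSet_Ico fun s hs =>
        pow_nonneg (Real.sqrt_nonneg _) k)]
  have hI1 : (0:ℝ) ≤ ∫ s in (0:ℝ)..h, (Real.sqrt (1-h^2)/h * s)^k :=
    intervalIntegral.integral_nonneg hh0.le fun s hs =>
      pow_nonneg (mul_nonneg (by positivity) hs.1) k
  have hI2 : (0:ℝ) ≤ ∫ s in h..(1:ℝ), (Real.sqrt (1-s^2))^k :=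
    intervalIntegral.integral_nonneg hh1.le fun s hs =>
      pow_nonneg (Real.sqrt_nonneg _) k
  calc ∫⁻ s, (volume : Measure (Fin k → ℝ)) (Prod.mk s ⁻¹' W)
      ≤ ∫⁻ s, (Ioo (0:ℝ) 1).indicator (fun s => ENNReal.ofReal ((r s)^k) * Kk) s :=
        lintegral_mono slice_bound
    _ = ∫⁻ s in Ioo (0:ℝ) 1, ENNReal.ofReal ((r s)^k) * Kk := by
        rw [lintegral_indicator measurableSet_Ioo]
    _ = ∫⁻ s in Ioo (0:ℝ) h ∪ Ico h 1, ENNReal.ofReal ((r s)^k) * Kk := by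
        have hsp : Ioo (0:ℝ) 1 = Ioo 0 h ∪ Ico h 1 := by
          ext s
          simp only [mem_Ioo, mem_union, mem_Ico]
          constructor
          · rintro ⟨a, b⟩
            rcases lt_or_ge s h with hc | hc
            · exact Or.inl ⟨a, hc⟩
            · exact Or.inr ⟨hc, b⟩
          · rintro (⟨a, b⟩ | ⟨a, b⟩)
            · exact ⟨a, b.trans hh1⟩
            · exact ⟨hh0.trans_le a, b⟩
        rw [hsp]
    _ = (∫⁻ s in Ioo (0:ℝ) h, ENNReal.ofReal ((r s)^k) * Kk)
        + ∫⁻ s in Ico h 1, ENNReal.ofReal ((r s)^k) * Kk :=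
        lintegral_union measurableSet_Ico (by
          apply Set.disjoint_left.mpr
          rintro s ⟨_, b⟩ ⟨a, _⟩
          exact absurd a (not_le.mpr b))
    _ ≤ (∫⁻ s in Ioo (0:ℝ) h, ENNReal.ofReal ((Real.sqrt (1-h^2)/h * s)^k) * Kk)
        + ∫⁻ s in Ico h 1, ENNReal.ofReal ((Real.sqrt (1-s^2))^k) * Kk := by
        apply add_le_add
        · refine setLIntegral_mono ((ENNReal.measurable_ofReal.comp
            hcont1.measurable).mul_const Kk) fun s hs => ?_
          have hrs0 : 0 ≤ r s := le_min (Real.sqrt_nonneg _)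
            (mul_nonneg (by positivity) hs.1.le)
          exact mul_le_mul_left (ENNReal.ofReal_le_ofReal
            (pow_le_pow_left₀ hrs0 (min_le_right _ _) k)) Kk
        · refine setLIntegral_mono ((ENNReal.measurable_ofReal.comp
            hcont2.measurable).mul_const Kk) fun s hs => ?_
          have hs0 : 0 < s := hh0.trans_le hs.1
          have hrs0 : 0 ≤ r s := le_min (Real.sqrt_nonneg _) (by positivity)
          exact mul_le_mul_left (ENNReal.ofReal_le_ofReal
            (pow_le_pow_left₀ hrs0 (min_le_left _ _) k)) Kk
    _ = ENNReal.ofReal ((∫ s in (0:ℝ)..h, (Real.sqrt (1-h^2)/h * s)^k)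
          + ∫ s in h..(1:ℝ), (Real.sqrt (1-s^2))^k) * Kk := by
        rw [lintegral_mul_const' Kk _ measure_closedBall_lt_top.ne,
          lintegral_mul_const' Kk _ measure_closedBall_lt_top.ne,
          hint1, hint2, ← add_mul, ← ENNReal.ofReal_add hI1 hI2]


end Aux

/-- For `n ≥ 2`, `u ∈ S^{n−1}` and `h ∈ (0,1)`, the rotation-invariant probability
measure of the cap `C(u,h)` is strictly less than
`((1−h²)^{(n−1)/2} / (nh)) · (κ_{n−1}/κ_n)`. -/
theorem measure_of_cap_lt {n : ℕ} (hn : 2 ≤ n)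
    (u : Euc n) (hu : u ∈ sphere (0 : Euc n) 1)
    (h : ℝ) (hh : h ∈ Set.Ioo (0 : ℝ) 1)
    (σ : Measure (Euc n)) [IsProbabilityMeasure σ]
    (hσsph : σ (sphere (0 : Euc n) 1)ᶜ = 0)
    (hσinv : ∀ e : Euc n ≃ₗᵢ[ℝ] Euc n, σ.map e = σ) :
    (σ {θ | θ ∈ sphere (0 : Euc n) 1 ∧ h ≤ ⟪u, θ⟫}).toReal <
      (1 - h ^ 2) ^ (((n : ℝ) - 1) / 2) / (n * h) * (kappa (n - 1) / kappa n) := by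
  obtain ⟨hh0, hh1⟩ := hh
  obtain ⟨k, rfl⟩ : ∃ k, n = k + 1 := ⟨n - 1, by omega⟩
  have hk : 1 ≤ k := by omega
  have hu1 : ‖u‖ = 1 := by simpa using hu
  -- measurability of caps
  have hcapm : ∀ w : Euc (k+1), MeasurableSet {θ : Euc (k+1) | θ ∈ sphere (0:Euc (k+1)) 1 ∧
      h ≤ ⟪w, θ⟫} := by
    intro w
    have : {θ : Euc (k+1) | θ ∈ sphere (0:Euc (k+1)) 1 ∧ h ≤ ⟪w, θ⟫}
        = sphere (0:Euc (k+1)) 1 ∩ {θ | h ≤ ⟪w, θ⟫} := rfl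
    rw [this]
    exact (isClosed_sphere.measurableSet).inter
      (measurableSet_le measurable_const (continuous_const.inner continuous_id).measurable)
  -- constancy of cap measure
  have hcap_const : ∀ w : Euc (k+1), ‖w‖ = 1 →
      σ {θ | θ ∈ sphere (0:Euc (k+1)) 1 ∧ h ≤ ⟪w, θ⟫}
        = σ {θ | θ ∈ sphere (0:Euc (k+1)) 1 ∧ h ≤ ⟪u, θ⟫} := by
    intro w hw
    obtain ⟨e, he⟩ : ∃ e : Euc (k+1) ≃ₗᵢ[ℝ] Euc (k+1), e u = w :=
      ⟨Submodule.reflection (ℝ ∙ (u - w))ᗮ, Submodule.reflection_sub (by rw [hu1, hw])⟩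
    have hpre : (⇑e) ⁻¹' {θ | θ ∈ sphere (0:Euc (k+1)) 1 ∧ h ≤ ⟪w, θ⟫}
        = {θ | θ ∈ sphere (0:Euc (k+1)) 1 ∧ h ≤ ⟪u, θ⟫} := by
      ext θ
      simp only [mem_preimage, mem_setOf_eq, mem_sphere, dist_zero_right, e.norm_map]
      rw [← he, e.inner_map_map]
    calc σ {θ | θ ∈ sphere (0:Euc (k+1)) 1 ∧ h ≤ ⟪w, θ⟫}
        = (σ.map e) {θ | θ ∈ sphere (0:Euc (k+1)) 1 ∧ h ≤ ⟪w, θ⟫} := by rw [hσinv e]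
      _ = σ ((⇑e) ⁻¹' {θ | θ ∈ sphere (0:Euc (k+1)) 1 ∧ h ≤ ⟪w, θ⟫}) :=
          Measure.map_apply e.continuous.measurable (hcapm w)
      _ = _ := by rw [hpre]
  -- constancy of cone volume
  set e₀ : Euc (k+1) := EuclideanSpace.single 0 1 with he₀
  have he₀n : ‖e₀‖ = 1 := by simp [he₀]
  have hconem : ∀ w : Euc (k+1), MeasurableSet {x : Euc (k+1) |
      (0 < ‖x‖ ∧ ‖x‖ < 1) ∧ h * ‖x‖ ≤ ⟪w, x⟫} := by
    intro w
    refine MeasurableSet.inter ?_ ?_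
    · exact ((measurableSet_lt measurable_const continuous_norm.measurable).inter
        (measurableSet_lt continuous_norm.measurable measurable_const))
    · exact measurableSet_le (continuous_const.mul continuous_norm).measurable
        (continuous_const.inner continuous_id).measurable
  have hcone_const : ∀ w : Euc (k+1), ‖w‖ = 1 →
      volume {x : Euc (k+1) | (0 < ‖x‖ ∧ ‖x‖ < 1) ∧ h * ‖x‖ ≤ ⟪w, x⟫}
        = volume {x : Euc (k+1) | (0 < ‖x‖ ∧ ‖x‖ < 1) ∧ h * ‖x‖ ≤ ⟪e₀, x⟫} := by
    intro w hw
    obtain ⟨e, he⟩ : ∃ e : Euc (k+1) ≃ₗᵢ[ℝ] Euc (k+1), e e₀ = w :=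
      ⟨Submodule.reflection (ℝ ∙ (e₀ - w))ᗮ, Submodule.reflection_sub (by rw [he₀n, hw])⟩
    have hpre : (⇑e) ⁻¹' {x : Euc (k+1) | (0 < ‖x‖ ∧ ‖x‖ < 1) ∧ h * ‖x‖ ≤ ⟪w, x⟫}
        = {x : Euc (k+1) | (0 < ‖x‖ ∧ ‖x‖ < 1) ∧ h * ‖x‖ ≤ ⟪e₀, x⟫} := by
      ext x
      simp only [mem_preimage, mem_setOf_eq, e.norm_map]
      rw [← he, e.inner_map_map]
    rw [← hpre, (e.measurePreserving).measure_preimage (hconem w).nullMeasurableSet]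
  -- Fubini: σ(cap) * vol(ball) = vol(cone)
  set c : ℝ≥0∞ := σ {θ | θ ∈ sphere (0:Euc (k+1)) 1 ∧ h ≤ ⟪u, θ⟫} with hc
  set V : ℝ≥0∞ := volume {x : Euc (k+1) | (0 < ‖x‖ ∧ ‖x‖ < 1) ∧ h * ‖x‖ ≤ ⟪e₀, x⟫} with hV
  set Kn : ℝ≥0∞ := volume (ball (0 : Euc (k+1)) 1) with hKn
  have hBE : MeasurableSet {p : Euc (k+1) × Euc (k+1) |
      (0 < ‖p.2‖ ∧ ‖p.2‖ < 1) ∧ h * ‖p.2‖ ≤ ⟪p.2, p.1⟫} := by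
    refine MeasurableSet.inter ?_ ?_
    · exact ((measurableSet_lt measurable_const
        (continuous_norm.comp continuous_snd).measurable).inter
        (measurableSet_lt (continuous_norm.comp continuous_snd).measurable measurable_const))
    · exact measurableSet_le
        (continuous_const.mul (continuous_norm.comp continuous_snd)).measurable
        (continuous_snd.inner continuous_fst).measurable
  have hkey : c * Kn = V := by
    set E : Set (Euc (k+1) × Euc (k+1)) := {p |
      (0 < ‖p.2‖ ∧ ‖p.2‖ < 1) ∧ h * ‖p.2‖ ≤ ⟪p.2, p.1⟫} with hE
    have h1 : (σ.prod volume) E = ∫⁻ θ, volume (Prod.mk θ ⁻¹' E) ∂σ :=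
      Measure.prod_apply hBE
    have h2 : (σ.prod volume) E = ∫⁻ x, σ ((fun θ => (θ, x)) ⁻¹' E) ∂volume :=
      Measure.prod_apply_symm hBE
    have hae : ∀ᵐ θ ∂σ, θ ∈ sphere (0:Euc (k+1)) 1 := mem_ae_iff.2 hσsph
    have hθslice : ∀ θ : Euc (k+1), θ ∈ sphere (0:Euc (k+1)) 1 →
        volume (Prod.mk θ ⁻¹' E) = V := by
      intro θ hθ
      have : Prod.mk θ ⁻¹' E
          = {x : Euc (k+1) | (0 < ‖x‖ ∧ ‖x‖ < 1) ∧ h * ‖x‖ ≤ ⟪θ, x⟫} := by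
        ext x
        simp only [mem_preimage, hE, mem_setOf_eq]
        rw [real_inner_comm]
      rw [this, hcone_const θ (by simpa using hθ)]
    have hRHS1 : (σ.prod volume) E = V := by
      rw [h1, lintegral_congr_ae (hae.mono fun θ hθ => hθslice θ hθ), lintegral_const,
        measure_univ, mul_one]
    have hxslice : ∀ x : Euc (k+1),
        σ ((fun θ => (θ, x)) ⁻¹' E)
          = (ball (0:Euc (k+1)) 1 \ {0}).indicator (fun _ => c) x := by
      intro x
      by_cases hx : x ∈ ball (0:Euc (k+1)) 1 \ {0}
      · have hx1 : ‖x‖ < 1 := by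
          have := hx.1
          rwa [mem_ball_zero_iff] at this
        have hx0 : 0 < ‖x‖ := by
          rw [norm_pos_iff]
          exact fun hx0 => hx.2 (by simp [hx0])
        rw [indicator_of_mem hx]
        have hpre : (fun θ => (θ, x)) ⁻¹' E = {θ : Euc (k+1) | h * ‖x‖ ≤ ⟪x, θ⟫} := by
          ext θ
          simp only [mem_preimage, hE, mem_setOf_eq]
          tauto
        rw [hpre]
        have hconull : σ {θ : Euc (k+1) | h * ‖x‖ ≤ ⟪x, θ⟫}
            = σ ({θ : Euc (k+1) | h * ‖x‖ ≤ ⟪x, θ⟫} ∩ sphere (0:Euc (k+1)) 1) := by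
          apply le_antisymm
          · calc σ {θ : Euc (k+1) | h * ‖x‖ ≤ ⟪x, θ⟫}
                ≤ σ (({θ : Euc (k+1) | h * ‖x‖ ≤ ⟪x, θ⟫} ∩ sphere (0:Euc (k+1)) 1)
                    ∪ (sphere (0:Euc (k+1)) 1)ᶜ) := by
                  apply measure_mono
                  intro θ hθ
                  by_cases hs : θ ∈ sphere (0:Euc (k+1)) 1
                  · exact Or.inl ⟨hθ, hs⟩
                  · exact Or.inr hs
            _ ≤ σ ({θ : Euc (k+1) | h * ‖x‖ ≤ ⟪x, θ⟫} ∩ sphere (0:Euc (k+1)) 1)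
                + σ (sphere (0:Euc (k+1)) 1)ᶜ := measure_union_le _ _
            _ = _ := by rw [hσsph, add_zero]
          · exact measure_mono inter_subset_left
        have hsetw : {θ : Euc (k+1) | h * ‖x‖ ≤ ⟪x, θ⟫} ∩ sphere (0:Euc (k+1)) 1
            = {θ | θ ∈ sphere (0:Euc (k+1)) 1 ∧ h ≤ ⟪‖x‖⁻¹ • x, θ⟫} := by
          ext θ
          simp only [mem_inter_iff, mem_setOf_eq, real_inner_smul_left]
          constructor
          · rintro ⟨h1, h2⟩
            refine ⟨h2, ?_⟩
            rw [← mul_le_mul_iff_right₀ hx0]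
            calc ‖x‖ * h = h * ‖x‖ := mul_comm _ _
              _ ≤ ⟪x, θ⟫ := h1
              _ = ‖x‖ * (‖x‖⁻¹ * ⟪x, θ⟫) := by
                  field_simp
          · rintro ⟨h1, h2⟩
            refine ⟨?_, h1⟩
            have := mul_le_mul_of_nonneg_left h2 hx0.le
            calc h * ‖x‖ = ‖x‖ * h := mul_comm _ _
              _ ≤ ‖x‖ * (‖x‖⁻¹ * ⟪x, θ⟫) := this
              _ = ⟪x, θ⟫ := by field_simp
        rw [hconull, hsetw, hcap_const (‖x‖⁻¹ • x) (norm_smul_inv_norm (by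
          intro h0
          rw [h0] at hx0
          simp at hx0))]
      · rw [indicator_of_notMem hx]
        have : (fun θ => (θ, x)) ⁻¹' E = ∅ := by
          ext θ
          simp only [mem_preimage, hE, mem_setOf_eq, mem_empty_iff_false, iff_false]
          rintro ⟨⟨a, b⟩, _⟩
          apply hx
          constructor
          · rwa [mem_ball_zero_iff]
          · simp only [mem_singleton_iff]
            intro h0
            rw [h0] at a
            simp at a
        rw [this]
        simp
    have hRHS2 : (σ.prod volume) E = c * Kn := by
      rw [h2, lintegral_congr fun x => hxslice x,
        lintegral_indicator (measurableSet_ball.diff (measurableSet_singleton 0)),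
        setLIntegral_const,
        measure_diff_null (measure_singleton 0)]
    rw [← hRHS2, hRHS1]
  -- convert cone set to coordinates and apply the volume bound
  have hVcoord : V = volume {x : EuclideanSpace ℝ (Fin (k+1)) |
      (0 < ‖x‖ ∧ ‖x‖ < 1) ∧ h * ‖x‖ ≤ x 0} := by
    rw [hV]
    congr 1
    ext x
    simp only [mem_setOf_eq, he₀, EuclideanSpace.inner_single_left, map_one, one_mul]
  have hVbound := volume_cone_le hk hh0 hh1
  rw [← hVcoord] at hVbound
  -- exact value of the first integral
  have hI1eq : (∫ s in (0:ℝ)..h, (Real.sqrt (1-h^2)/h * s)^k)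
      = (Real.sqrt (1-h^2))^k * h / (k+1) := by
    have : ∀ s : ℝ, (Real.sqrt (1-h^2)/h * s)^k = (Real.sqrt (1-h^2)/h)^k * s^k := by
      intro s; rw [mul_pow]
    simp only [this]
    rw [intervalIntegral.integral_const_mul, integral_pow]
    rw [div_pow]
    have hh0' : h ≠ 0 := hh0.ne'
    field_simp
    ring
  -- numeric abbreviations
  set D : ℝ := Real.sqrt (1 - h^2) with hD
  have hD2 : D^2 = 1 - h^2 := Real.sq_sqrt (by nlinarith)
  have hI2lt : (∫ s in h..(1:ℝ), (Real.sqrt (1-s^2))^k) < D^(k+2) / ((k+1) * h) :=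
    key_integral_lt hk hh0 hh1
  set κk : ℝ := kappa k with hκk
  set κn : ℝ := kappa (k+1) with hκn
  have hκk_pos : 0 < κk :=
    ENNReal.toReal_pos (measure_closedBall_pos _ _ one_pos).ne' measure_closedBall_lt_top.ne
  have hκn_pos : 0 < κn :=
    ENNReal.toReal_pos (measure_closedBall_pos _ _ one_pos).ne' measure_closedBall_lt_top.ne
  have hKnκ : Kn.toReal = κn := by
    rw [hKn, hκn, kappa, Measure.addHaar_closedBall_eq_addHaar_ball]
  have hKn_fin : Kn ≠ ⊤ := measure_ball_lt_top.ne
  have hKn_pos : Kn ≠ 0 := by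
    rw [hKn]
    exact (measure_ball_pos _ _ one_pos).ne'
  -- real-number bound for V
  have hVfin : V ≠ ⊤ :=
    (lt_of_le_of_lt hVbound (ENNReal.mul_lt_top ENNReal.ofReal_lt_top
      measure_closedBall_lt_top)).ne
  have hI1n : (0:ℝ) ≤ ∫ s in (0:ℝ)..h, (Real.sqrt (1-h^2)/h * s)^k :=
    intervalIntegral.integral_nonneg hh0.le fun s hs =>
      pow_nonneg (mul_nonneg (by positivity) hs.1) k
  have hI2n : (0:ℝ) ≤ ∫ s in h..(1:ℝ), (Real.sqrt (1-s^2))^k :=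
    intervalIntegral.integral_nonneg hh1.le fun s hs =>
      pow_nonneg (Real.sqrt_nonneg _) k
  have hVreal : V.toReal ≤ ((∫ s in (0:ℝ)..h, (Real.sqrt (1-h^2)/h * s)^k)
      + ∫ s in h..(1:ℝ), (Real.sqrt (1-s^2))^k) * κk := by
    have := ENNReal.toReal_mono (by
      exact (ENNReal.mul_lt_top ENNReal.ofReal_lt_top measure_closedBall_lt_top).ne) hVbound
    rwa [ENNReal.toReal_mul, ENNReal.toReal_ofReal (by linarith)] at this
  have hVlt : V.toReal < D^k / ((k+1) * h) * κk := by
    apply lt_of_le_of_lt hVreal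
    have hsum : (∫ s in (0:ℝ)..h, (Real.sqrt (1-h^2)/h * s)^k)
        + (∫ s in h..(1:ℝ), (Real.sqrt (1-s^2))^k) < D^k / ((k+1) * h) := by
      rw [hI1eq]
      have : D^k * h / (k+1) + D^(k+2) / ((k+1) * h) = D^k / ((k+1)*h) := by
        rw [show D^(k+2) = D^k * D^2 by ring, hD2]
        field_simp
        ring
      linarith
    exact mul_lt_mul_of_pos_right hsum hκk_pos
  -- conclude
  have hcreal : c.toReal = V.toReal / κn := by
    have := congrArg ENNReal.toReal hkey
    rw [ENNReal.toReal_mul, hKnκ] at this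
    rw [← this, mul_div_assoc, div_self hκn_pos.ne', mul_one]
  have hcast : ((k:ℝ) + 1) = ((k+1 : ℕ) : ℝ) := by push_cast; ring
  have hrpow : (1 - h^2) ^ ((((k+1:ℕ) : ℝ) - 1) / 2) = D^k := by
    rw [hD, show (((k+1:ℕ):ℝ) - 1)/2 = (1/2) * (k:ℝ) by push_cast; ring,
      Real.rpow_mul (by nlinarith : (0:ℝ) ≤ 1 - h^2), Real.rpow_natCast,
      ← Real.sqrt_eq_rpow]
  have hgoal : (σ {θ | θ ∈ sphere (0:Euc (k+1)) 1 ∧ h ≤ ⟪u, θ⟫}).toReal = c.toReal := rfl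
  rw [hgoal, hcreal]
  have hkap : kappa (k+1-1) = κk := by
    rw [hκk]
    norm_num
  rw [hkap, hrpow]
  rw [div_lt_iff₀ hκn_pos]
  have heq2 : D^k / (((k+1:ℕ):ℝ) * h) * (κk/κn) * κn = D^k / (((k:ℝ)+1) * h) * κk := by
    push_cast
    field_simp
  rw [heq2]
  exact hVlt
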